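/- Let K be the attractor of a finite system S = {S_1, ..., S_m} of contraction maps on a complete metric space X. If for any indices i, j there is a chain i_0 = i, i_1, ..., i_n = j such that S_{i_k}(K) ∩ S_{i_{k+1}}(K) ≠ ∅ for all k, then K is connected. -/

import Mathlib

/-- `x` and `y` are joined by an `ε`-chain inside `K`. -/
def epsChain {X : Type*} [MetricSpace X] (K : Set X) (ε : ℝ) : X → X → Prop :=
  Relation.ReflTransGen (fun a b => a ∈ K ∧ b ∈ K ∧ dist a b ≤ ε)

lemma epsChain_mono {X : Type*} [MetricSpace X] {K : Set X} {ε ε' : ℝ}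
    (h : ε ≤ ε') {x y : X} (hc : epsChain K ε x y) : epsChain K ε' x y :=
  Relation.ReflTransGen.mono (fun _ _ ⟨ha, hb, hd⟩ => ⟨ha, hb, hd.trans h⟩) _ _ hc

/-- If the intersection graph of the pieces `Sᵢ(K)` of the attractor `K` is
chain-connected, then `K` is connected. -/
theorem stmt_0 {X : Type*} [MetricSpace X] [CompleteSpace X] {m : ℕ}
    (S : Fin m → X → X)
    (hS : ∀ i, ∃ r : NNReal, r < 1 ∧ LipschitzWith r (S i))
    (K : Set X) (hKne : K.Nonempty) (hKc : IsCompact K)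
    (hKinv : K = ⋃ i, S i '' K)
    (hchain : ∀ i j : Fin m, ∃ (n : ℕ) (c : ℕ → Fin m), c 0 = i ∧ c n = j ∧
      ∀ k < n, (S (c k) '' K ∩ S (c (k + 1)) '' K).Nonempty) :
    IsConnected K := by
  classical
  -- contraction ratios
  set r : Fin m → NNReal := fun i => (hS i).choose with hr
  have hrlt : ∀ i, r i < 1 := fun i => (hS i).choose_spec.1
  have hrlip : ∀ i, LipschitzWith (r i) (S i) := fun i => (hS i).choose_spec.2
  set ρ : NNReal := Finset.univ.sup r with hρ
  have hρlt : (ρ : ℝ) < 1 := by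
    have : ρ < 1 := Finset.sup_lt_iff (by norm_num : (⊥ : NNReal) < 1) |>.2
      (fun i _ => hrlt i)
    exact_mod_cast this
  have hρ0 : (0 : ℝ) ≤ (ρ : ℝ) := ρ.coe_nonneg
  have hrρ : ∀ i, (r i : ℝ) ≤ ρ := fun i => by
    exact_mod_cast Finset.le_sup (Finset.mem_univ i)
  -- invariance of K under each S i
  have hinv : ∀ i, ∀ x ∈ K, S i x ∈ K := by
    intro i x hx
    rw [hKinv]
    exact Set.mem_iUnion.2 ⟨i, ⟨x, hx, rfl⟩⟩
  -- the contraction step for chains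
  have key : ∀ ε : ℝ, 0 ≤ ε → (∀ x ∈ K, ∀ y ∈ K, epsChain K ε x y) →
      ∀ x ∈ K, ∀ y ∈ K, epsChain K ((ρ : ℝ) * ε) x y := by
    intro ε hε hyp x hx y hy
    -- within a single piece
    have piece : ∀ i : Fin m, ∀ a ∈ K, ∀ b ∈ K,
        epsChain K ((ρ : ℝ) * ε) (S i a) (S i b) := by
      intro i a ha b hb
      refine Relation.ReflTransGen.lift (S i) ?_ _ _ (hyp a ha b hb)
      rintro p q ⟨hp, hq, hd⟩
      refine ⟨hinv i p hp, hinv i q hq, ?_⟩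
      calc dist (S i p) (S i q) ≤ (r i : ℝ) * dist p q := (hrlip i).dist_le_mul p q
        _ ≤ (ρ : ℝ) * ε := mul_le_mul (hrρ i) hd dist_nonneg hρ0
    obtain ⟨i, xi, hxi, hxe⟩ : ∃ i, ∃ a ∈ K, S i a = x := by
      have := hKinv ▸ hx
      simpa using this
    obtain ⟨j, yj, hyj, hye⟩ : ∃ j, ∃ a ∈ K, S j a = y := by
      have := hKinv ▸ hy
      simpa using this
    obtain ⟨n, c, hc0, hcn, hcint⟩ := hchain i j
    have main : ∀ k, k ≤ n → ∀ z ∈ S (c k) '' K, epsChain K ((ρ : ℝ) * ε) x z := by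
      intro k
      induction k with
      | zero =>
        intro _ z hz
        obtain ⟨b, hb, rfl⟩ := hz
        rw [hc0]
        exact hxe ▸ piece i xi hxi b hb
      | succ k ih =>
        intro hk z hz
        obtain ⟨w, hw1, hw2⟩ := hcint k (Nat.lt_of_succ_le hk)
        have h1 : epsChain K ((ρ : ℝ) * ε) x w :=
          ih (Nat.le_of_succ_le hk) w hw1
        obtain ⟨a, ha, rfl⟩ := hw2
        obtain ⟨b, hb, rfl⟩ := hz
        exact h1.trans (piece _ a ha b hb)
    have := main n le_rfl y (by rw [hcn]; exact ⟨yj, hyj, hye⟩)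
    exact this
  -- a uniform bound on K
  obtain ⟨C, hC⟩ := Metric.isBounded_iff.1 hKc.isBounded
  set D : ℝ := max C 0 with hD
  have hD0 : 0 ≤ D := le_max_right _ _
  have step_n : ∀ n : ℕ, ∀ x ∈ K, ∀ y ∈ K, epsChain K ((ρ : ℝ) ^ n * D) x y := by
    intro n
    induction n with
    | zero =>
      intro x hx y hy
      have hpow : (ρ : ℝ) ^ 0 * D = D := by simp
      rw [hpow]
      exact Relation.ReflTransGen.single ⟨hx, hy, (hC hx hy).trans (le_max_left _ _)⟩
    | succ n ih =>
      intro x hx y hy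
      have : (ρ : ℝ) ^ (n + 1) * D = (ρ : ℝ) * ((ρ : ℝ) ^ n * D) := by ring
      rw [this]
      exact key _ (mul_nonneg (pow_nonneg hρ0 n) hD0) ih x hx y hy
  have all : ∀ ε : ℝ, 0 < ε → ∀ x ∈ K, ∀ y ∈ K, epsChain K ε x y := by
    intro ε hε x hx y hy
    obtain ⟨n, hn⟩ := exists_pow_lt_of_lt_one (div_pos hε (by linarith : (0:ℝ) < D + 1)) hρlt
    have hlt : (ρ : ℝ) ^ n * D < ε := by
      have h1 : (ρ : ℝ) ^ n * D ≤ (ρ : ℝ) ^ n * (D + 1) :=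
        mul_le_mul_of_nonneg_left (by linarith) (pow_nonneg hρ0 n)
      have h2 : (ρ : ℝ) ^ n * (D + 1) < ε := by
        rw [lt_div_iff₀ (by linarith : (0:ℝ) < D + 1)] at hn
        exact hn
      linarith
    exact epsChain_mono hlt.le (step_n n x hx y hy)
  -- now prove connectedness
  refine ⟨hKne, ?_⟩
  intro u v hu hv hsuv ⟨x, hxK, hxu⟩ ⟨y, hyK, hyv⟩
  by_contra hne
  rw [Set.not_nonempty_iff_eq_empty] at hne
  set A : Set X := K \ v with hA
  set B : Set X := K \ u with hB
  have hxA : x ∈ A := ⟨hxK, fun hxv => by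
    have : x ∈ K ∩ (u ∩ v) := ⟨hxK, hxu, hxv⟩
    simp [hne] at this⟩
  have hyB : y ∈ B := ⟨hyK, fun hyu => by
    have : y ∈ K ∩ (u ∩ v) := ⟨hyK, hyu, hyv⟩
    simp [hne] at this⟩
  have hAB : ∀ z ∈ K, z ∈ A ∨ z ∈ B := by
    intro z hz
    rcases hsuv hz with h | h
    · left; exact ⟨hz, fun hzv => by
        have : z ∈ K ∩ (u ∩ v) := ⟨hz, h, hzv⟩
        simp [hne] at this⟩
    · right; exact ⟨hz, fun hzu => by
        have : z ∈ K ∩ (u ∩ v) := ⟨hz, hzu, h⟩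
        simp [hne] at this⟩
  have hAc : IsCompact A := hKc.of_isClosed_subset (hKc.isClosed.sdiff hv) Set.diff_subset
  have hBcl : IsClosed B := hKc.isClosed.sdiff hu
  have hdisj : Disjoint A B := by
    rw [Set.disjoint_left]
    rintro z ⟨hzK, hzv⟩ ⟨_, hzu⟩
    rcases hsuv hzK with h | h
    · exact hzu h
    · exact hzv h
  obtain ⟨δ, hδ0, hδ⟩ := hdisj.exists_thickenings hAc hBcl
  have hdistAB : ∀ p ∈ A, ∀ q ∈ B, δ ≤ dist p q := by
    intro p hp q hq
    by_contra hlt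
    push_neg at hlt
    have hq1 : q ∈ Metric.thickening δ A :=
      Metric.mem_thickening_iff.2 ⟨p, hp, by rwa [dist_comm] at hlt⟩
    have hq2 : q ∈ Metric.thickening δ B := Set.mem_of_mem_of_subset hq (Metric.self_subset_thickening hδ0 B)
    exact hδ.ne_of_mem hq1 hq2 rfl
  have hch := all (δ / 2) (by linarith) x hxK y hyK
  have stayA : ∀ z, epsChain K (δ / 2) x z → z ∈ A := by
    intro z hz
    induction hz with
    | refl => exact hxA
    | tail _ hbc ih =>
      obtain ⟨hb, hc, hd⟩ := hbc
      rcases hAB _ hc with h | h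
      · exact h
      · exact absurd ((hdistAB _ ih _ h).trans hd) (by linarith)
  have : y ∈ A := stayA y hch
  exact this.2 hyv
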